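/- Let K be a real quadratic field with an embedding into ℝ, and ω ∈ K with 0 < ω' < 1 < ω (where ω' is the Galois conjugate). Let {b_k} be the purely periodic minus continued fraction expansion of ω with period m (so b_{k+m} = b_k, all b_k ≥ 2), ω_k = ⟦b_k, b_{k+1}, ...⟧ the shifted continued fractions, and define A_0 = 1, A_{k+1} = A_k/ω_{k+1}. Then A_{k+1} = b_k A_k - A_{k-1} for all k, and hence the ℤ-module ⟨A_{k+1}, A_k⟩ equals ⟨1, ω⟩ for all k. -/

import Mathlib

lemma span_pair_aux (K : Type*) [Field K] (a c : K) (n : ℤ) :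
    Submodule.span ℤ ({(n : K) * a - c, a} : Set K)
      = Submodule.span ℤ ({c, a} : Set K) := by
  apply le_antisymm
  · rw [Submodule.span_le]
    intro x hx
    simp only [Set.mem_insert_iff, Set.mem_singleton_iff] at hx
    rcases hx with rfl | rfl
    · have ha : a ∈ Submodule.span ℤ ({c, a} : Set K) :=
        Submodule.subset_span (by simp)
      have hc : c ∈ Submodule.span ℤ ({c, a} : Set K) :=
        Submodule.subset_span (by simp)
      have := Submodule.sub_mem _ (Submodule.smul_mem _ n ha) hc
      simpa [zsmul_eq_mul] using this
    · exact Submodule.subset_span (by simp)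
  · rw [Submodule.span_le]
    intro x hx
    simp only [Set.mem_insert_iff, Set.mem_singleton_iff] at hx
    have ha : a ∈ Submodule.span ℤ ({(n : K) * a - c, a} : Set K) :=
      Submodule.subset_span (by simp)
    have hd : (n : K) * a - c ∈ Submodule.span ℤ ({(n : K) * a - c, a} : Set K) :=
      Submodule.subset_span (by simp)
    rcases hx with rfl | rfl
    · have := Submodule.sub_mem _ (Submodule.smul_mem _ n ha) hd
      simpa [zsmul_eq_mul] using this
    · exact ha



/-- Let `K` be a real quadratic field with conjugation `conj` and an embedding `ι` into `ℝ`,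
and `ω ∈ K` with `0 < ω' < 1 < ω`.  Let `{b k}` be the partial quotients of the purely
periodic minus continued fraction of `ω` (period `m`, all `b k ≥ 2`), `ωs k` the shifted
continued fractions (so `ωs k = b k - 1/ωs (k+1)` and `ωs 0 = ω`), and `A 0 = 1`,
`A (k+1) = A k / ωs (k+1)`.  Then `A (k+1) = b k · A k - A (k-1)` for all `k`, and the
`ℤ`-module `⟨A (k+1), A k⟩` equals `⟨1, ω⟩` for all `k`. -/
theorem continuedFraction_module_invariance
    (K : Type*) [Field K] [CharZero K] (hrank : Module.finrank ℚ K = 2)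
    (conj : K →+* K) (hconj : ∀ x, conj (conj x) = x)
    (ι : K →+* ℝ) (ω : K)
    (hω1 : 1 < ι ω) (hω2 : 0 < ι (conj ω)) (hω3 : ι (conj ω) < 1)
    (m : ℕ) (hm : 0 < m)
    (b : ℤ → ℤ) (hb : ∀ k, 2 ≤ b k) (hbper : ∀ k, b (k + m) = b k)
    (ωs : ℤ → K) (hω0 : ωs 0 = ω) (hωne : ∀ k, ωs k ≠ 0)
    (hrec : ∀ k, ωs k = (b k : K) - (ωs (k + 1))⁻¹)
    (A : ℤ → K) (hA0 : A 0 = 1) (hA : ∀ k, A (k + 1) = A k / ωs (k + 1)) :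
    (∀ k : ℤ, A (k + 1) = (b k : K) * A k - A (k - 1)) ∧
    (∀ k : ℤ, Submodule.span ℤ ({A (k + 1), A k} : Set K)
      = Submodule.span ℤ ({1, ω} : Set K)) := by
  have key : ∀ k : ℤ, A (k + 1) = (b k : K) * A k - A (k - 1) := by
    intro k
    have h2 : A k = A (k - 1) / ωs k := by
      have := hA (k - 1); rwa [show k - 1 + 1 = k by ring] at this
    have h2' : A k * ωs k = A (k - 1) := by
      rw [h2, div_mul_cancel₀ _ (hωne k)]
    have hinv : (ωs (k + 1))⁻¹ = (b k : K) - ωs k := by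
      have := hrec k; linear_combination this
    rw [hA k, div_eq_mul_inv, hinv]
    linear_combination -h2'
  refine ⟨key, ?_⟩
  have base : Submodule.span ℤ ({A 1, A 0} : Set K)
      = Submodule.span ℤ ({1, ω} : Set K) := by
    have hA1 : A 1 = (b 0 : K) - ω := by
      have h := hA 0
      have hinv : (ωs (0 + 1))⁻¹ = (b 0 : K) - ωs 0 := by
        have := hrec 0; linear_combination this
      rw [show (0 : ℤ) + 1 = 1 by ring] at h hinv
      rw [h, hA0, div_eq_mul_inv, one_mul, hinv, hω0]
    have := span_pair_aux K (1 : K) ω (b 0)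
    rw [hA1, hA0]
    rw [mul_one] at this
    rw [this, Set.pair_comm]
  have step : ∀ k : ℤ, Submodule.span ℤ ({A (k + 1), A k} : Set K)
      = Submodule.span ℤ ({A k, A (k - 1)} : Set K) := by
    intro k
    have h := span_pair_aux K (A k) (A (k - 1)) (b k)
    rw [← key k] at h
    rw [h, Set.pair_comm]
  intro k
  induction k using Int.induction_on with
  | zero => simpa using base
  | succ n ih =>
      have := step (n + 1)
      rw [show (n : ℤ) + 1 - 1 = n by ring] at this
      rw [this]; rw [← ih]
  | pred n ih =>
      rw [show (-(n : ℤ) - 1 + 1) = -n by ring, ← step (-n)]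
      exact ih
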